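/- Let X, Y, Z be N×N column-stochastic matrices and p an N-dimensional probability vector that is invariant for all three, i.e., Xp = Yp = Zp = p. Then the strong subadditivity inequality H_p(XYZ) + H_p(Y) ≤ H_p(XY) + H_p(YZ) holds, where H_p(T) = Σ_ν p_ν H(t_ν) is the weighted entropy of T with columns t_ν. -/

import Mathlib

open Finset

/-- Classical relative entropy `H(u‖v) = Σ_i u_i log(u_i/v_i)`;
the convention `0 · log(0/x) = 0` holds automatically in Lean. -/
noncomputable def relEnt {ι : Type*} [Fintype ι] (u v : ι → ℝ) : ℝ :=
  ∑ i, u i * Real.log (u i / v i)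

/-- Shannon entropy `H(u) = -Σ_i u_i log u_i` (with `0 · log 0 = 0`). -/
noncomputable def shEnt {ι : Type*} [Fintype ι] (u : ι → ℝ) : ℝ :=
  -∑ i, u i * Real.log (u i)

/-- A probability vector: nonnegative entries summing to 1. -/
def IsProbVec {ι : Type*} [Fintype ι] (p : ι → ℝ) : Prop :=
  (∀ i, 0 ≤ p i) ∧ ∑ i, p i = 1

/-- A column-stochastic matrix: nonnegative entries, every column sums to 1. -/
def IsColStochastic {ι : Type*} [Fintype ι] (T : Matrix ι ι ℝ) : Prop :=
  (∀ i j, 0 ≤ T i j) ∧ ∀ j, ∑ i, T i j = 1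

/-- Weighted relative entropy `H_p(A‖B) = Σ_ν p_ν H(a_ν‖b_ν)` over the columns. -/
noncomputable def wRelEnt {ι : Type*} [Fintype ι] (p : ι → ℝ) (A B : Matrix ι ι ℝ) : ℝ :=
  ∑ ν, p ν * relEnt (fun i => A i ν) (fun i => B i ν)

/-- Weighted entropy `H_p(T) = Σ_ν p_ν H(t_ν)` over the columns. -/
noncomputable def wEnt {ι : Type*} [Fintype ι] (p : ι → ℝ) (T : Matrix ι ι ℝ) : ℝ :=
  ∑ ν, p ν * shEnt (fun i => T i ν)

/-- Strong subadditivity of the weighted entropy at a common invariant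
probability vector: if `Xp = Yp = Zp = p` then
`H_p(XYZ) + H_p(Y) ≤ H_p(XY) + H_p(YZ)`. -/

lemma log_sum_ineq {ι : Type*} [Fintype ι] (a b : ι → ℝ) (ha : ∀ i, 0 ≤ a i)
    (hb : ∀ i, 0 ≤ b i) (hab : ∀ i, b i = 0 → a i = 0) :
    (∑ i, a i) * Real.log ((∑ i, a i) / (∑ i, b i)) ≤ ∑ i, a i * Real.log (a i / b i) := by
  set A := ∑ i, a i with hA
  set B := ∑ i, b i with hB
  by_cases hA0 : A = 0
  · have hz : ∀ i ∈ univ, a i = 0 :=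
      (Finset.sum_eq_zero_iff_of_nonneg (fun i _ => ha i)).mp hA0
    rw [hA0]
    have : ∑ i, a i * Real.log (a i / b i) = 0 :=
      Finset.sum_eq_zero (fun i hi => by rw [hz i hi, zero_mul])
    simp [this]
  · have hApos : 0 < A := lt_of_le_of_ne (Finset.sum_nonneg fun i _ => ha i) (Ne.symm hA0)
    have hB0 : B ≠ 0 := by
      intro h
      have hbz : ∀ i ∈ univ, b i = 0 :=
        (Finset.sum_eq_zero_iff_of_nonneg (fun i _ => hb i)).mp h
      exact hA0 (Finset.sum_eq_zero fun i hi => hab i (hbz i hi))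
    have hBpos : 0 < B := lt_of_le_of_ne (Finset.sum_nonneg fun i _ => hb i) (Ne.symm hB0)
    have key : ∀ i, a i * Real.log (A / B) + (a i - b i * (A / B)) ≤ a i * Real.log (a i / b i) := by
      intro i
      by_cases hai : a i = 0
      · rw [hai]
        simp only [zero_mul, zero_add, zero_sub]
        have : 0 ≤ b i * (A / B) := mul_nonneg (hb i) (div_nonneg hApos.le hBpos.le)
        linarith
      · have haipos : 0 < a i := lt_of_le_of_ne (ha i) (Ne.symm hai)
        have hbipos : 0 < b i := by
          rcases lt_or_eq_of_le (hb i) with h | h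
          · exact h
          · exact absurd (hab i h.symm) hai
        have ht : 0 < (a i / b i) / (A / B) := by positivity
        have hlog : 1 - ((a i / b i) / (A / B))⁻¹ ≤ Real.log ((a i / b i) / (A / B)) := by
          have := Real.log_le_sub_one_of_pos (inv_pos.mpr ht)
          rw [Real.log_inv] at this
          linarith
        have hsplit : Real.log ((a i / b i) / (A / B)) = Real.log (a i / b i) - Real.log (A / B) :=
          Real.log_div (by positivity) (by positivity)
        rw [hsplit] at hlog
        have hinv : ((a i / b i) / (A / B))⁻¹ = (b i * A) / (a i * B) := by
          field_simp
        rw [hinv] at hlog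
        have h2 : a i * (1 - (b i * A) / (a i * B)) ≤ a i * (Real.log (a i / b i) - Real.log (A / B)) :=
          mul_le_mul_of_nonneg_left hlog haipos.le
        have h3 : a i * (1 - (b i * A) / (a i * B)) = a i - b i * (A / B) := by
          field_simp
        nlinarith [h2, h3]
    calc A * Real.log (A / B) = ∑ i, (a i * Real.log (A / B) + (a i - b i * (A / B))) := by
          rw [Finset.sum_add_distrib, ← Finset.sum_mul, Finset.sum_sub_distrib, ← Finset.sum_mul]
          rw [← hA, ← hB]
          field_simp
          ring
      _ ≤ ∑ i, a i * Real.log (a i / b i) := Finset.sum_le_sum (fun i _ => key i)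

lemma relent_mono {N : ℕ} (X : Matrix (Fin N) (Fin N) ℝ) (hX : IsColStochastic X)
    (a b : Fin N → ℝ) (ha : ∀ j, 0 ≤ a j) (hb : ∀ j, 0 ≤ b j)
    (hab : ∀ j, b j = 0 → a j = 0) :
    ∑ i, (∑ j, X i j * a j) * Real.log ((∑ j, X i j * a j) / (∑ j, X i j * b j)) ≤
      ∑ j, a j * Real.log (a j / b j) := by
  have step : ∀ i, (∑ j, X i j * a j) * Real.log ((∑ j, X i j * a j) / (∑ j, X i j * b j)) ≤
      ∑ j, X i j * (a j * Real.log (a j / b j)) := by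
    intro i
    have h := log_sum_ineq (fun j => X i j * a j) (fun j => X i j * b j)
      (fun j => mul_nonneg (hX.1 i j) (ha j)) (fun j => mul_nonneg (hX.1 i j) (hb j))
      (fun j hj => by
        rcases mul_eq_zero.mp hj with h | h
        · rw [h, zero_mul]
        · rw [hab j h, mul_zero])
    refine h.trans_eq (Finset.sum_congr rfl fun j _ => ?_)
    by_cases hx : X i j = 0
    · rw [hx]; ring
    · rw [mul_div_mul_left _ _ hx]; ring
  calc ∑ i, (∑ j, X i j * a j) * Real.log ((∑ j, X i j * a j) / (∑ j, X i j * b j))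
      ≤ ∑ i, ∑ j, X i j * (a j * Real.log (a j / b j)) := Finset.sum_le_sum fun i _ => step i
    _ = ∑ j, (∑ i, X i j) * (a j * Real.log (a j / b j)) := by
        rw [Finset.sum_comm]
        exact Finset.sum_congr rfl fun j _ => by rw [Finset.sum_mul]
    _ = ∑ j, a j * Real.log (a j / b j) := by
        exact Finset.sum_congr rfl fun j _ => by rw [hX.2 j, one_mul]

lemma mul_colStochastic {N : ℕ} (A B : Matrix (Fin N) (Fin N) ℝ)
    (hA : IsColStochastic A) (hB : IsColStochastic B) : IsColStochastic (A * B) := by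
  constructor
  · intro i j
    rw [Matrix.mul_apply]
    exact Finset.sum_nonneg fun k _ => mul_nonneg (hA.1 i k) (hB.1 k j)
  · intro j
    simp only [Matrix.mul_apply]
    rw [Finset.sum_comm]
    have : ∀ k, (∑ i, A i k * B k j) = B k j := by
      intro k
      rw [← Finset.sum_mul, hA.2 k, one_mul]
    rw [Finset.sum_congr rfl fun k _ => this k]
    exact hB.2 j

lemma wEnt_diff {N : ℕ} (W Z : Matrix (Fin N) (Fin N) ℝ)
    (hW : IsColStochastic W) (hZ : IsColStochastic Z)
    (p : Fin N → ℝ) (hp : IsProbVec p) (hZp : Z.mulVec p = p) :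
    ∑ w2, ∑ w3, Z w2 w3 * p w3 *
        (∑ w1, W w1 w2 * Real.log (W w1 w2 / (W * Z) w1 w3)) =
      wEnt p (W * Z) - wEnt p W := by
  have key : ∀ w2 w3 w1, Z w2 w3 * p w3 * (W w1 w2 * Real.log (W w1 w2 / (W * Z) w1 w3))
      = Z w2 w3 * p w3 * (W w1 w2 * Real.log (W w1 w2))
        - Z w2 w3 * p w3 * (W w1 w2 * Real.log ((W * Z) w1 w3)) := by
    intro w2 w3 w1
    by_cases hZ0 : Z w2 w3 = 0
    · rw [hZ0]; ring
    by_cases hp0 : p w3 = 0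
    · rw [hp0]; ring
    by_cases hW0 : W w1 w2 = 0
    · rw [hW0]; ring
    have hZpos : 0 < Z w2 w3 := lt_of_le_of_ne (hZ.1 w2 w3) (Ne.symm hZ0)
    have hWpos : 0 < W w1 w2 := lt_of_le_of_ne (hW.1 w1 w2) (Ne.symm hW0)
    have hWZpos : 0 < (W * Z) w1 w3 := by
      rw [Matrix.mul_apply]
      have h1 : W w1 w2 * Z w2 w3 ≤ ∑ k, W w1 k * Z k w3 :=
        Finset.single_le_sum (fun k _ => mul_nonneg (hW.1 w1 k) (hZ.1 k w3)) (mem_univ w2)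
      nlinarith
    rw [Real.log_div (ne_of_gt hWpos) (ne_of_gt hWZpos)]
    ring
  calc ∑ w2, ∑ w3, Z w2 w3 * p w3 * (∑ w1, W w1 w2 * Real.log (W w1 w2 / (W * Z) w1 w3))
      = ∑ w2, ∑ w3, ∑ w1, (Z w2 w3 * p w3 * (W w1 w2 * Real.log (W w1 w2))
          - Z w2 w3 * p w3 * (W w1 w2 * Real.log ((W * Z) w1 w3))) := by
        refine Finset.sum_congr rfl fun w2 _ => Finset.sum_congr rfl fun w3 _ => ?_
        rw [Finset.mul_sum]
        exact Finset.sum_congr rfl fun w1 _ => key w2 w3 w1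
    _ = (∑ w2, ∑ w3, ∑ w1, Z w2 w3 * p w3 * (W w1 w2 * Real.log (W w1 w2)))
        - ∑ w2, ∑ w3, ∑ w1, Z w2 w3 * p w3 * (W w1 w2 * Real.log ((W * Z) w1 w3)) := by
        simp [Finset.sum_sub_distrib]
    _ = wEnt p (W * Z) - wEnt p W := by
        have hT1 : (∑ w2, ∑ w3, ∑ w1, Z w2 w3 * p w3 * (W w1 w2 * Real.log (W w1 w2)))
            = - wEnt p W := by
          have h1 : ∀ w2, (∑ w3, ∑ w1, Z w2 w3 * p w3 * (W w1 w2 * Real.log (W w1 w2)))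
              = p w2 * ∑ w1, W w1 w2 * Real.log (W w1 w2) := by
            intro w2
            have h2 : ∀ w3, (∑ w1, Z w2 w3 * p w3 * (W w1 w2 * Real.log (W w1 w2)))
                = (Z w2 w3 * p w3) * ∑ w1, W w1 w2 * Real.log (W w1 w2) := fun w3 =>
              (Finset.mul_sum _ _ _).symm
            rw [Finset.sum_congr rfl fun w3 _ => h2 w3, ← Finset.sum_mul]
            have : (∑ w3, Z w2 w3 * p w3) = p w2 := congrFun hZp w2
            rw [this]
          rw [Finset.sum_congr rfl fun w2 _ => h1 w2]
          simp [wEnt, shEnt, mul_neg, Finset.sum_neg_distrib]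
        have hT2 : (∑ w2, ∑ w3, ∑ w1, Z w2 w3 * p w3 * (W w1 w2 * Real.log ((W * Z) w1 w3)))
            = - wEnt p (W * Z) := by
          rw [Finset.sum_comm]
          have h1 : ∀ w3, (∑ w2, ∑ w1, Z w2 w3 * p w3 * (W w1 w2 * Real.log ((W * Z) w1 w3)))
              = p w3 * ∑ w1, (W * Z) w1 w3 * Real.log ((W * Z) w1 w3) := by
            intro w3
            rw [Finset.sum_comm]
            have h2 : ∀ w1, (∑ w2, Z w2 w3 * p w3 * (W w1 w2 * Real.log ((W * Z) w1 w3)))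
                = p w3 * ((W * Z) w1 w3 * Real.log ((W * Z) w1 w3)) := by
              intro w1
              have : ∀ w2, Z w2 w3 * p w3 * (W w1 w2 * Real.log ((W * Z) w1 w3))
                  = (W w1 w2 * Z w2 w3) * (p w3 * Real.log ((W * Z) w1 w3)) := by
                intro w2; ring
              rw [Finset.sum_congr rfl fun w2 _ => this w2, ← Finset.sum_mul]
              rw [← Matrix.mul_apply]
              ring
            rw [Finset.sum_congr rfl fun w1 _ => h2 w1, ← Finset.mul_sum]
          rw [Finset.sum_congr rfl fun w3 _ => h1 w3]
          simp [wEnt, shEnt, mul_neg, Finset.sum_neg_distrib]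
        rw [hT1, hT2]
        ring

theorem wEnt_strong_subadd {N : ℕ} (X Y Z : Matrix (Fin N) (Fin N) ℝ)
    (hX : IsColStochastic X) (hY : IsColStochastic Y) (hZ : IsColStochastic Z)
    (p : Fin N → ℝ) (hp : IsProbVec p)
    (hXp : X.mulVec p = p) (hYp : Y.mulVec p = p) (hZp : Z.mulVec p = p) :
    wEnt p (X * Y * Z) + wEnt p Y ≤ wEnt p (X * Y) + wEnt p (Y * Z) := by
  have hXY : IsColStochastic (X * Y) := mul_colStochastic X Y hX hY
  have h1 := wEnt_diff Y Z hY hZ p hp hZp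
  have h2 := wEnt_diff (X * Y) Z hXY hZ p hp hZp
  have h3 : (∑ w2, ∑ w3, Z w2 w3 * p w3 *
        (∑ w1, (X * Y) w1 w2 * Real.log ((X * Y) w1 w2 / (X * Y * Z) w1 w3))) ≤
      ∑ w2, ∑ w3, Z w2 w3 * p w3 *
        (∑ w1, Y w1 w2 * Real.log (Y w1 w2 / (Y * Z) w1 w3)) := by
    refine Finset.sum_le_sum fun w2 _ => Finset.sum_le_sum fun w3 _ => ?_
    by_cases hc : Z w2 w3 * p w3 = 0
    · rw [hc]; simp
    have hcpos : 0 < Z w2 w3 * p w3 :=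
      lt_of_le_of_ne (mul_nonneg (hZ.1 w2 w3) (hp.1 w3)) (Ne.symm hc)
    have hZ0 : Z w2 w3 ≠ 0 := fun h => hc (by rw [h, zero_mul])
    have hZpos : 0 < Z w2 w3 := lt_of_le_of_ne (hZ.1 w2 w3) (Ne.symm hZ0)
    refine mul_le_mul_of_nonneg_left ?_ hcpos.le
    have hab : ∀ j, (Y * Z) j w3 = 0 → Y j w2 = 0 := by
      intro j hj
      rw [Matrix.mul_apply] at hj
      have hall := (Finset.sum_eq_zero_iff_of_nonneg
        (fun k _ => mul_nonneg (hY.1 j k) (hZ.1 k w3))).mp hj w2 (Finset.mem_univ w2)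
      rcases mul_eq_zero.mp hall with h | h
      · exact h
      · exact absurd h hZ0
    have hmono := relent_mono X hX (fun j => Y j w2) (fun j => (Y * Z) j w3)
      (fun j => hY.1 j w2)
      (fun j => by
        show (0:ℝ) ≤ (Y * Z) j w3
        rw [Matrix.mul_apply]
        exact Finset.sum_nonneg fun k _ => mul_nonneg (hY.1 j k) (hZ.1 k w3))
      hab
    refine le_trans (le_of_eq ?_) hmono
    refine Finset.sum_congr rfl fun w0 _ => ?_
    have e1 : (∑ j, X w0 j * Y j w2) = (X * Y) w0 w2 := (Matrix.mul_apply).symm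
    have e2 : (∑ j, X w0 j * (Y * Z) j w3) = (X * Y * Z) w0 w3 := by
      rw [mul_assoc, Matrix.mul_apply]
    rw [e1, e2]
  linarith
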